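/- Let k be a field of characteristic zero, I a nonzero ideal of R = k[x_1,…,x_n], and a a natural number. Then the set {p ∈ k^n : ord_p(I) ≥ a+1} equals the set of common zeros in k^n of all elements of D^a(I); in particular the locus of points of order greater than a is Zariski closed, so that the function p ↦ ord_p(I) is upper semicontinuous. -/

import Mathlib

open MvPolynomial

/-- The derivative ideal: the ideal generated by `I` together with all first partial
derivatives of its elements. -/
noncomputable def derivIdeal {k : Type*} [CommSemiring k] {σ : Type*}
    (I : Ideal (MvPolynomial σ k)) : Ideal (MvPolynomial σ k) :=
  I ⊔ Ideal.span {g | ∃ f ∈ I, ∃ i : σ, g = pderiv i f}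

/-- The order of a nonzero polynomial at a point `p`: the smallest total degree of a monomial
appearing in the shifted polynomial `f(x+p)`. -/
noncomputable def polyOrdAt {k : Type*} [CommSemiring k] {σ : Type*} (p : σ → k)
    (f : MvPolynomial σ k) : ℕ :=
  sInf {m | ∃ d ∈ (aeval (fun i => X i + C (p i)) f : MvPolynomial σ k).support,
    (d.sum fun _ e => e) = m}

/-- The order of a nonzero ideal at a point: `min {ord_p f : 0 ≠ f ∈ I}`. -/
noncomputable def idealOrdAt {k : Type*} [CommSemiring k] {σ : Type*} (p : σ → k)
    (I : Ideal (MvPolynomial σ k)) : ℕ :=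
  sInf {m | ∃ f ∈ I, f ≠ 0 ∧ polyOrdAt p f = m}

namespace OrdAux

variable {k : Type*} [CommSemiring k] {σ : Type*}

/-- Ideal of polynomials all of whose monomials have total degree ≥ m. -/
def Jdeg (k : Type*) [CommSemiring k] (σ : Type*) (m : ℕ) : Ideal (MvPolynomial σ k) where
  carrier := {f | ∀ d ∈ f.support, m ≤ d.sum fun _ e => e}
  zero_mem' := by simp
  add_mem' := by
    intro f g hf hg d hd
    classical
    rcases Finset.mem_union.mp (MvPolynomial.support_add hd) with h | h
    · exact hf d h
    · exact hg d h
  smul_mem' := by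
    intro c f hf d hd
    classical
    rw [smul_eq_mul] at hd
    obtain ⟨d1, _, d2, h2, rfl⟩ := Finset.mem_add.mp (MvPolynomial.support_mul c f hd)
    have := hf d2 h2
    rw [Finsupp.sum_add_index' (fun _ => rfl) (fun _ _ _ => rfl)]
    omega

lemma mem_Jdeg {m : ℕ} {f : MvPolynomial σ k} :
    f ∈ Jdeg k σ m ↔ ∀ d ∈ f.support, m ≤ d.sum fun _ e => e := Iff.rfl

lemma Jdeg_antitone {m m' : ℕ} (h : m ≤ m') : Jdeg k σ m' ≤ Jdeg k σ m :=
  fun _ hf d hd => le_trans h (hf d hd)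

lemma coeff_pderiv [DecidableEq σ] (i : σ) (d : σ →₀ ℕ) (f : MvPolynomial σ k) :
    coeff d (pderiv i f) = (d i + 1 : ℕ) * coeff (d + Finsupp.single i 1) f := by
  induction f using MvPolynomial.induction_on' with
  | monomial s a =>
    rw [pderiv_monomial, coeff_monomial, coeff_monomial]
    split_ifs with h1 h2 h2
    · subst h2
      simp [Finsupp.add_apply, Finsupp.single_apply, mul_comm]
    · have hsi : s i = 0 := by
        by_contra hs
        apply h2
        ext j
        subst h1
        simp only [Finsupp.add_apply, Finsupp.tsub_apply, Finsupp.single_apply]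
        split_ifs with h
        · subst h; omega
        · omega
      simp [hsi]
    · exfalso; apply h1
      ext j
      have := DFunLike.congr_fun h2 j
      simp only [Finsupp.add_apply, Finsupp.tsub_apply, Finsupp.single_apply] at *
      omega
    · ring
  | add f g hf hg => simp [hf, hg, mul_add]

lemma single_sum (d : σ →₀ ℕ) (i : σ) :
    ((d + Finsupp.single i 1).sum fun _ e => e) = (d.sum fun _ e => e) + 1 := by
  classical
  rw [Finsupp.sum_add_index' (fun _ => rfl) (fun _ _ _ => rfl), Finsupp.sum_single_index rfl]

lemma sum_eq_zero_iff (d : σ →₀ ℕ) : (d.sum fun _ e => e) = 0 ↔ d = 0 := by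
  classical
  constructor
  · intro h
    ext j
    by_contra hj
    have hjs : j ∈ d.support := Finsupp.mem_support_iff.mpr (by simpa using hj)
    have := Finset.sum_eq_zero_iff.mp h j hjs
    simp at this
    exact hj (by simp [this])
  · rintro rfl; simp

/-- derivative lowers the order by at most one -/
lemma pderiv_mem_Jdeg [DecidableEq σ] {m : ℕ} {f : MvPolynomial σ k} (hf : f ∈ Jdeg k σ (m + 1))
    (i : σ) : pderiv i f ∈ Jdeg k σ m := by
  intro d hd
  rw [mem_support_iff, coeff_pderiv] at hd
  have h2 : coeff (d + Finsupp.single i 1) f ≠ 0 := fun h => hd (by simp [h])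
  have := hf _ (mem_support_iff.mpr h2)
  rw [single_sum] at this
  omega

/-- characteristic-zero key step: if `f` vanishes to order ≥ 1 and all its partials vanish to
order ≥ m, then `f` vanishes to order ≥ m+1. -/
lemma mem_Jdeg_succ [NoZeroDivisors k] [CharZero k] [DecidableEq σ] {m : ℕ} {f : MvPolynomial σ k}
    (h1 : f ∈ Jdeg k σ 1) (hd : ∀ i : σ, pderiv i f ∈ Jdeg k σ m) : f ∈ Jdeg k σ (m + 1) := by
  intro d hdsupp
  have hs1 : 1 ≤ d.sum fun _ e => e := h1 d hdsupp
  have hdne : d ≠ 0 := by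
    intro h; rw [← sum_eq_zero_iff d] at h; omega
  obtain ⟨i, hi⟩ : ∃ i, d i ≠ 0 := by
    by_contra h
    push_neg at h
    exact hdne (Finsupp.ext fun j => h j)
  set d' := d - Finsupp.single i 1 with hd'
  have hrec : d' + Finsupp.single i 1 = d := by
    ext j
    simp only [Finsupp.add_apply, Finsupp.tsub_apply, Finsupp.single_apply, hd']
    split_ifs with h
    · subst h; omega
    · omega
  have hcf : coeff d f ≠ 0 := mem_support_iff.mp hdsupp
  have hco : coeff d' (pderiv i f) ≠ 0 := by
    rw [coeff_pderiv, hrec]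
    have hdi : d' i + 1 = d i := by
      have : d' i = d i - 1 := by
        rw [hd', Finsupp.tsub_apply, Finsupp.single_apply, if_pos rfl]
      omega
    rw [hdi]
    exact mul_ne_zero (Nat.cast_ne_zero.mpr hi) hcf
  have := hd i d' (mem_support_iff.mpr hco)
  have hsum : (d.sum fun _ e => e) = (d'.sum fun _ e => e) + 1 := by
    rw [← hrec, single_sum]
  omega

end OrdAux

namespace OrdAux2

open OrdAux

variable {k : Type*} [CommRing k] {σ : Type*}

lemma derivIdeal_def (I : Ideal (MvPolynomial σ k)) :
    derivIdeal I = I ⊔ Ideal.span {g | ∃ f ∈ I, ∃ i : σ, g = pderiv i f} := rfl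

/-- The shift automorphism `f(x) ↦ f(x + p)`. -/
noncomputable def shiftE (p : σ → k) : MvPolynomial σ k ≃ₐ[k] MvPolynomial σ k :=
  AlgEquiv.ofAlgHom (aeval fun i => X i + C (p i)) (aeval fun i => X i - C (p i))
    (by ext i <;> simp) (by ext i <;> simp)

@[simp] lemma shiftE_apply (p : σ → k) (f : MvPolynomial σ k) :
    shiftE p f = aeval (fun i => X i + C (p i)) f := rfl

lemma pderiv_shift (p : σ → k) (i : σ) (f : MvPolynomial σ k) :
    pderiv i (aeval (fun j => X j + C (p j)) f)
      = aeval (fun j => X j + C (p j)) (pderiv i f) := by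
  classical
  induction f using MvPolynomial.induction_on with
  | C a => simp [aeval_C, pderiv_C]
  | add f g hf hg => simp only [map_add, hf, hg]
  | mul_X f j hf =>
    rcases eq_or_ne i j with rfl | h
    · simp only [map_mul, pderiv_mul, hf, aeval_X, map_add, aeval_C, pderiv_X_self,
        pderiv_C, add_zero, map_one, mul_one]
    · simp only [map_mul, pderiv_mul, hf, aeval_X, map_add, aeval_C,
        pderiv_X_of_ne (Ne.symm h), pderiv_C, add_zero, map_zero, mul_zero]

lemma constantCoeff_shift (p : σ → k) (f : MvPolynomial σ k) :
    constantCoeff (aeval (fun j => X j + C (p j)) f) = eval p f := by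
  induction f using MvPolynomial.induction_on with
  | C a => simp [aeval_C]
  | add f g hf hg => simp only [map_add, hf, hg]
  | mul_X f j hf =>
    simp only [map_mul, map_add, aeval_X, aeval_C, hf, constantCoeff_X, constantCoeff_C,
      eval_X, eval_mul, zero_add]

/-- The shifted degree-filtration ideal. -/
noncomputable def Jp (p : σ → k) (m : ℕ) : Ideal (MvPolynomial σ k) :=
  (Jdeg k σ m).comap (shiftE p : MvPolynomial σ k →+* MvPolynomial σ k)

lemma mem_Jp {p : σ → k} {m : ℕ} {f : MvPolynomial σ k} :
    f ∈ Jp p m ↔ aeval (fun i => X i + C (p i)) f ∈ Jdeg k σ m := Iff.rfl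

lemma Jp_antitone {p : σ → k} {m m' : ℕ} (h : m ≤ m') : Jp p m' ≤ Jp p m :=
  fun _ hf => Jdeg_antitone h hf

lemma mem_Jp_one {p : σ → k} {f : MvPolynomial σ k} :
    f ∈ Jp p 1 ↔ eval p f = 0 := by
  rw [mem_Jp, ← constantCoeff_shift p f]
  set g := aeval (fun i => X i + C (p i)) f
  constructor
  · intro h
    by_contra hc
    have h0 : (0 : σ →₀ ℕ) ∈ g.support := mem_support_iff.mpr hc
    have := h 0 h0
    simp at this
  · intro h d hd
    by_contra hcon
    push_neg at hcon
    have hz : d = 0 := (sum_eq_zero_iff d).mp (by omega)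
    subst hz
    exact mem_support_iff.mp hd h

end OrdAux2

namespace OrdAux3

open OrdAux OrdAux2

variable {k : Type*} [Field k] [CharZero k] {σ : Type*}

lemma deriv_step (p : σ → k) (I : Ideal (MvPolynomial σ k)) {m : ℕ} (hm : 1 ≤ m) :
    I ≤ Jp p (m + 1) ↔ derivIdeal I ≤ Jp p m := by
  classical
  constructor
  · intro h
    rw [derivIdeal_def, sup_le_iff]
    refine ⟨le_trans h (Jp_antitone (by omega)), Ideal.span_le.mpr ?_⟩
    rintro g ⟨f, hf, i, rfl⟩
    rw [SetLike.mem_coe, mem_Jp, ← pderiv_shift]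
    exact pderiv_mem_Jdeg (h hf) i
  · intro h f hf
    have hfD : f ∈ derivIdeal I := by
      rw [derivIdeal_def]; exact Ideal.mem_sup_left hf
    rw [mem_Jp]
    refine mem_Jdeg_succ ?_ fun i => ?_
    · exact Jdeg_antitone hm (mem_Jp.mp (h hfD))
    · rw [pderiv_shift]
      have hpD : pderiv i f ∈ derivIdeal I := by
        rw [derivIdeal_def]
        exact Ideal.mem_sup_right (Ideal.subset_span ⟨f, hf, i, rfl⟩)
      exact mem_Jp.mp (h hpD)

lemma deriv_iter (p : σ → k) (a : ℕ) (I : Ideal (MvPolynomial σ k)) :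
    I ≤ Jp p (a + 1) ↔ derivIdeal^[a] I ≤ Jp p 1 := by
  induction a generalizing I with
  | zero => simp
  | succ a ih =>
    rw [Function.iterate_succ_apply, ← ih (derivIdeal I),
      ← deriv_step p I (by omega : 1 ≤ a + 1)]

lemma le_polyOrdAt {p : σ → k} {f : MvPolynomial σ k} (hf : f ≠ 0) {m : ℕ} :
    m ≤ polyOrdAt p f ↔ aeval (fun i => X i + C (p i)) f ∈ Jdeg k σ m := by
  have hne : (aeval (fun i => X i + C (p i)) f : MvPolynomial σ k) ≠ 0 := by
    intro h
    apply hf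
    have h2 : shiftE p f = shiftE p 0 := by rw [shiftE_apply, h, map_zero]
    exact (shiftE p).injective h2
  constructor
  · intro h d hd
    exact le_trans h (Nat.sInf_le ⟨d, hd, rfl⟩)
  · intro h
    obtain ⟨d, hd⟩ := exists_coeff_ne_zero hne
    have hnonempty : {m' | ∃ d ∈ (aeval (fun i => X i + C (p i)) f : MvPolynomial σ k).support,
        (d.sum fun _ e => e) = m'}.Nonempty := ⟨_, d, mem_support_iff.mpr hd, rfl⟩
    obtain ⟨d', hd', hsum⟩ := Nat.sInf_mem hnonempty
    rw [polyOrdAt, ← hsum]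
    exact h d' hd'

end OrdAux3

open OrdAux OrdAux2 OrdAux3 in
/-- For a nonzero ideal `I` over a field of characteristic zero and a natural number `a`,
the locus of points of order `≥ a+1` (i.e. order `> a`) is exactly the common zero locus of
the derivative ideal `Dᵃ(I)`; in particular it is Zariski closed, so the order function is
upper semicontinuous. -/
theorem order_locus_eq_zeroLocus_derivIdeal {k : Type*} [Field k] [CharZero k] {n : ℕ}
    (I : Ideal (MvPolynomial (Fin n) k)) (hI : I ≠ ⊥) (a : ℕ) :
    {p : Fin n → k | a + 1 ≤ idealOrdAt p I} =
      {p : Fin n → k | ∀ f ∈ derivIdeal^[a] I, eval p f = 0} := by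
  ext p
  simp only [Set.mem_setOf_eq]
  have key : I ≤ Jp p (a + 1) ↔ ∀ f ∈ derivIdeal^[a] I, eval p f = 0 := by
    rw [deriv_iter]
    exact ⟨fun h f hf => mem_Jp_one.mp (h hf), fun h f hf => mem_Jp_one.mpr (h f hf)⟩
  rw [← key]
  obtain ⟨f0, hf0I, hf0⟩ := Submodule.ne_bot_iff I |>.mp hI
  constructor
  · intro h f hf
    rcases eq_or_ne f 0 with rfl | hfne
    · exact (Jp p (a + 1)).zero_mem
    · have h1 : a + 1 ≤ polyOrdAt p f := le_trans h (Nat.sInf_le ⟨f, hf, hfne, rfl⟩)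
      exact mem_Jp.mpr ((le_polyOrdAt hfne).mp h1)
  · intro h
    have hne : {m | ∃ f ∈ I, f ≠ 0 ∧ polyOrdAt p f = m}.Nonempty := ⟨_, f0, hf0I, hf0, rfl⟩
    obtain ⟨f, hfI, hfne, hord⟩ := Nat.sInf_mem hne
    rw [idealOrdAt, ← hord]
    exact (le_polyOrdAt hfne).mpr (mem_Jp.mp (h hfI))
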